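/- arXiv:1802.06208 — 5 statements merged into one kernel-verified Lean document; each statement's English description precedes it below -/
import Mathlib

section
/- Let p be a prime and let c, Q, R, φ be polynomials over ℤ_p with φ monic, such that c = φ·Q + R is the result of Euclidean division of c by φ. Then the p-adic Gauss valuation (minimum of the p-adic valuations of the coefficients) satisfies ν_p(c) = min(ν_p(Q), ν_p(R)). -/
open Polynomial

/-- The `p`-adic Gauss valuation of a polynomial over `ℤ_[p]`: the minimum of the
`p`-adic valuations of its coefficients (`⊤` for the zero polynomial). -/
noncomputable def gaussVal (p : ℕ) [Fact p.Prime] (P : Polynomial ℤ_[p]) : ℕ∞ :=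
  ⨅ i ∈ P.support, ((P.coeff i).valuation : ℕ∞)

lemma le_gaussVal_iff (p : ℕ) [Fact p.Prime] (P : Polynomial ℤ_[p]) (n : ℕ) :
    (n : ℕ∞) ≤ gaussVal p P ↔ C ((p : ℤ_[p]) ^ n) ∣ P := by
  rw [C_dvd_iff_dvd_coeff, gaussVal, le_iInf₂_iff]
  constructor
  · intro h i
    by_cases hi : i ∈ P.support
    · have h' := h i hi
      rw [Nat.cast_le] at h'
      rw [← Ideal.mem_span_singleton]
      rw [PadicInt.mem_span_pow_iff_le_valuation _ (mem_support_iff.mp hi)]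
      exact h'
    · rw [notMem_support_iff.mp hi]; exact dvd_zero _
  · intro h i hi
    rw [Nat.cast_le]
    rw [← PadicInt.mem_span_pow_iff_le_valuation _ (mem_support_iff.mp hi),
      Ideal.mem_span_singleton]
    exact h i

lemma enat_eq_of_forall (a b : ℕ∞) (h : ∀ n : ℕ, (n : ℕ∞) ≤ a ↔ (n : ℕ∞) ≤ b) : a = b := by
  by_contra hne
  rcases lt_or_gt_of_ne hne with hlt | hlt
  · obtain ⟨m, rfl⟩ : ∃ m : ℕ, a = m := ⟨a.toNat, (ENat.coe_toNat hlt.ne_top).symm⟩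
    have := (h (m+1)).mpr (Order.add_one_le_of_lt hlt)
    exact absurd this (by exact_mod_cast Nat.not_succ_le_self m)
  · obtain ⟨m, rfl⟩ : ∃ m : ℕ, b = m := ⟨b.toNat, (ENat.coe_toNat hlt.ne_top).symm⟩
    have := (h (m+1)).mp (Order.add_one_le_of_lt hlt)
    exact absurd this (by exact_mod_cast Nat.not_succ_le_self m)

/-- If `c = φ·Q + R` is the Euclidean division of `c` by the monic polynomial `φ`
over `ℤ_[p]`, then `ν_p(c) = min(ν_p(Q), ν_p(R))` for the Gauss valuation. -/
theorem gaussVal_euclidean_division (p : ℕ) [Fact p.Prime]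
    (c Q R φ : Polynomial ℤ_[p]) (hφ : φ.Monic)
    (hdiv : c = φ * Q + R) (hR : R = 0 ∨ R.degree < φ.degree) :
    gaussVal p c = min (gaussVal p Q) (gaussVal p R) := by
  have hRdeg : R.degree < φ.degree := by
    rcases hR with rfl | h
    · rw [degree_zero]; exact bot_lt_iff_ne_bot.mpr (degree_ne_bot.mpr hφ.ne_zero)
    · exact h
  have huniq : c /ₘ φ = Q ∧ c %ₘ φ = R :=
    div_modByMonic_unique Q R hφ ⟨by rw [hdiv, add_comm], hRdeg⟩
  apply enat_eq_of_forall
  intro n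
  rw [le_min_iff, le_gaussVal_iff, le_gaussVal_iff, le_gaussVal_iff]
  set r : ℤ_[p] := (p : ℤ_[p]) ^ n
  constructor
  · rintro ⟨c', hc'⟩
    have h2 : c /ₘ φ = C r * (c' /ₘ φ) ∧ c %ₘ φ = C r * (c' %ₘ φ) := by
      apply div_modByMonic_unique _ _ hφ
      constructor
      · rw [hc']
        conv_rhs => rw [← modByMonic_add_div c' φ]
        ring
      · exact lt_of_le_of_lt (by rw [← smul_eq_C_mul]; exact degree_smul_le _ _) (degree_modByMonic_lt c' hφ)
    exact ⟨huniq.1 ▸ h2.1 ▸ Dvd.intro _ rfl, huniq.2 ▸ h2.2 ▸ Dvd.intro _ rfl⟩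
  · rintro ⟨hQ, hRd⟩
    rw [hdiv]
    exact dvd_add (hQ.mul_left _) hRd
end

section
/- Let p be a prime and f ∈ ℤ_p[X] be monic and irreducible. Then the reduction f̄ of f modulo p is a power of a single monic irreducible polynomial in 𝔽_p[X]. -/
open Polynomial

section Aux
variable {p : ℕ} [Fact p.Prime] (f : Polynomial ℤ_[p])

/-- The ideal `(p^k, f)` in `ℤ_p[X]`. -/
noncomputable def Jid (k : ℕ) : Ideal (Polynomial ℤ_[p]) :=
  Ideal.span {C ((p : ℤ_[p]) ^ k), f}

lemma mem_Jid_iff {k : ℕ} {x : Polynomial ℤ_[p]} :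
    x ∈ Jid f k ↔ ∃ s t, s * C ((p : ℤ_[p]) ^ k) + t * f = x :=
  Ideal.mem_span_pair

lemma Jid_mul {a b : ℕ} {x y : Polynomial ℤ_[p]}
    (hx : x ∈ Jid f a) (hy : y ∈ Jid f b) : x * y ∈ Jid f (a + b) := by
  obtain ⟨s, t, rfl⟩ := (mem_Jid_iff f).mp hx
  obtain ⟨s', t', rfl⟩ := (mem_Jid_iff f).mp hy
  rw [mem_Jid_iff]
  refine ⟨s * s' * C ((p : ℤ_[p]) ^ b) * 0 + s * s', 
    (s * C ((p:ℤ_[p])^a)) * t' + t * (s' * C ((p:ℤ_[p])^b)) + t * t' * f, ?_⟩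
  rw [pow_add, C_mul]
  ring

lemma Jid_antitone {a b : ℕ} (hab : a ≤ b) : Jid f b ≤ Jid f a := by
  intro x hx
  obtain ⟨s, t, rfl⟩ := (mem_Jid_iff f).mp hx
  rw [mem_Jid_iff]
  obtain ⟨c, rfl⟩ := Nat.exists_eq_add_of_le hab
  exact ⟨s * C ((p : ℤ_[p]) ^ c), t, by rw [pow_add, C_mul]; ring⟩

lemma f_mem_Jid (k : ℕ) : f ∈ Jid f k :=
  Ideal.subset_span (by simp)

lemma C_pow_dvd_mem_Jid (k : ℕ) {x : Polynomial ℤ_[p]}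
    (h : C ((p : ℤ_[p]) ^ k) ∣ x) : x ∈ Jid f k := by
  obtain ⟨c, rfl⟩ := h
  exact Ideal.mul_mem_right _ _ (Ideal.subset_span (by simp))

end Aux

section Aux2
variable {p : ℕ} [Fact p.Prime] {f : Polynomial ℤ_[p]}

/-- Key lemma: an element of `(p^k, f)` of degree `< deg f` has all coefficients
divisible by `p^k`. -/
lemma C_pow_dvd_of_mem_Jid_of_degree_lt (hf : f.Monic) {k : ℕ} {r : Polynomial ℤ_[p]}
    (hr : r ∈ Jid f k) (hdeg : r.degree < f.degree) :
    C ((p : ℤ_[p]) ^ k) ∣ r := by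
  rcases Nat.eq_zero_or_pos k with rfl | hk
  · simpa using one_dvd r
  obtain ⟨s, t, rfl⟩ := (mem_Jid_iff f).mp hr
  haveI : Fact (1 < p ^ k) := ⟨Nat.one_lt_pow hk.ne' (Fact.out : p.Prime).one_lt⟩
  set φk := PadicInt.toZModPow (p := p) k with hφk
  have hCp : (C ((p : ℤ_[p]) ^ k)).map φk = 0 := by
    rw [map_C]
    have : φk ((p : ℤ_[p]) ^ k) = 0 := by
      rw [← RingHom.mem_ker, PadicInt.ker_toZModPow, Ideal.mem_span_singleton]
    simp [this]
  set r := s * C ((p : ℤ_[p]) ^ k) + t * f with hrdef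
  have hmap : r.map φk = t.map φk * f.map φk := by
    rw [hrdef, Polynomial.map_add, Polynomial.map_mul, Polynomial.map_mul, hCp,
      mul_zero, zero_add]
  have hrmap : r.map φk = 0 := by
    by_cases ht : t.map φk = 0
    · rw [hmap, ht, zero_mul]
    · exfalso
      have hfm : (f.map φk).Monic := hf.map (f := φk)
      have hdegf : (f.map φk).degree = f.degree := by
        apply degree_map_eq_of_leadingCoeff_ne_zero
        rw [Monic.leadingCoeff hf, map_one]
        exact one_ne_zero
      have h1 : (r.map φk).degree = (t.map φk).degree + f.degree := by
        rw [hmap, hfm.degree_mul, hdegf]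
      have h2 : (r.map φk).degree < f.degree := lt_of_le_of_lt degree_map_le hdeg
      rw [h1] at h2
      have : (0 : WithBot ℕ) ≤ (t.map φk).degree := by
        rwa [Polynomial.zero_le_degree_iff]
      have := add_le_add_right this f.degree
      rw [add_zero, add_comm] at this
      exact absurd (lt_of_le_of_lt this h2) (lt_irrefl _)
  rw [C_dvd_iff_dvd_coeff]
  intro i
  have : φk (r.coeff i) = 0 := by
    have := congrArg (fun q => Polynomial.coeff q i) hrmap
    simpa [Polynomial.coeff_map] using this
  rw [← Ideal.mem_span_singleton, ← PadicInt.ker_toZModPow k, RingHom.mem_ker]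
  exact this

/-- Hausdorff-type lemma: an element of all the `(p^k, f)` is a multiple of `f`. -/
lemma mem_span_f_of_mem_all (hf : f.Monic) (x : Polynomial ℤ_[p]) (h : ∀ k, x ∈ Jid f k) :
    f ∣ x := by
  have hr : ∀ k, C ((p : ℤ_[p]) ^ k) ∣ (x %ₘ f) := by
    intro k
    apply C_pow_dvd_of_mem_Jid_of_degree_lt hf _ (degree_modByMonic_lt x hf)
    have hx : x - x %ₘ f = f * (x /ₘ f) := by
      nth_rewrite 1 [← modByMonic_add_div x f]; ring
    have : x - x %ₘ f ∈ Jid f k := by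
      rw [hx]; exact Ideal.mul_mem_right _ _ (f_mem_Jid f k)
    have := Ideal.sub_mem _ (h k) this
    simp at this; exact this
  have hz : x %ₘ f = 0 := by
    ext i
    have : ∀ k : ℕ, (p : ℤ_[p]) ^ k ∣ (x %ₘ f).coeff i := fun k =>
      (C_dvd_iff_dvd_coeff _ _).mp (hr k) i
    simp only [coeff_zero]
    have := IsHausdorff.haus (inferInstance :
        IsHausdorff (IsLocalRing.maximalIdeal ℤ_[p]) ℤ_[p]) ((x %ₘ f).coeff i) ?_
    · exact this
    · intro n
      rw [SModEq.zero, PadicInt.maximalIdeal_eq_span_p, ← Ideal.one_eq_top,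
        Ideal.smul_eq_mul, mul_one, Ideal.span_singleton_pow, Ideal.mem_span_singleton]
      exact this n
  have := modByMonic_add_div x f
  rw [hz, zero_add] at this
  exact ⟨x /ₘ f, this.symm⟩

end Aux2

section Aux3
variable {p : ℕ} [Fact p.Prime] {f : Polynomial ℤ_[p]}

/-- Limit lemma: a Cauchy sequence for the ideals `(p^k, f)` has a limit. -/
lemma exists_limit (hf : f.Monic) (e : ℕ → Polynomial ℤ_[p])
    (he : ∀ n, e (n + 1) - e n ∈ Jid f (n + 1)) :
    ∃ g : Polynomial ℤ_[p], ∀ n, g - e n ∈ Jid f n := by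
  set r : ℕ → Polynomial ℤ_[p] := fun n => e n %ₘ f with hrdef
  have hre : ∀ n k, e n - r n ∈ Jid f k := by
    intro n k
    have hx : e n - r n = f * (e n /ₘ f) := by
      nth_rewrite 1 [← modByMonic_add_div (e n) f]; ring
    rw [hx]
    exact Ideal.mul_mem_right _ _ (f_mem_Jid f k)
  have hrstep : ∀ n, C ((p : ℤ_[p]) ^ (n + 1)) ∣ (r (n + 1) - r n) := by
    intro n
    apply C_pow_dvd_of_mem_Jid_of_degree_lt hf
    · have h1 : r (n+1) - r n = (e (n+1) - e n) - (e (n+1) - r (n+1)) + (e n - r n) := by ring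
      rw [h1]
      exact Ideal.add_mem _ (Ideal.sub_mem _ (he n) (hre (n+1) (n+1))) (hre n (n+1))
    · exact lt_of_le_of_lt (degree_sub_le _ _)
        (max_lt (degree_modByMonic_lt _ hf) (degree_modByMonic_lt _ hf))
  -- coefficientwise Cauchy
  have hcoeff : ∀ i m n, m ≤ n → (r n).coeff i - (r m).coeff i ∈
      Ideal.span {(p : ℤ_[p]) ^ m} := by
    intro i m n hmn
    induction n with
    | zero => interval_cases m; simp
    | succ n ih =>
      rcases Nat.lt_or_ge m (n+1) with hm | hm
      · have h1 : (r (n+1)).coeff i - (r m).coeff i =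
            ((r (n+1)).coeff i - (r n).coeff i) + ((r n).coeff i - (r m).coeff i) := by ring
        rw [h1]
        refine Ideal.add_mem _ ?_ (ih (Nat.lt_succ_iff.mp hm))
        rw [Ideal.mem_span_singleton]
        have hd := (C_dvd_iff_dvd_coeff _ _).mp (hrstep n) i
        rw [Polynomial.coeff_sub] at hd
        exact dvd_trans (pow_dvd_pow _ (by omega)) hd
      · have : m = n + 1 := le_antisymm hmn hm
        subst this; simp
  haveI : IsPrecomplete (IsLocalRing.maximalIdeal ℤ_[p]) ℤ_[p] := inferInstance
  have hL : ∀ i, ∃ L : ℤ_[p], ∀ n, (r n).coeff i ≡ L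
      [SMOD ((IsLocalRing.maximalIdeal ℤ_[p]) ^ n • ⊤ : Ideal ℤ_[p])] := by
    intro i
    apply IsPrecomplete.prec this
    intro m n hmn
    rw [SModEq.sub_mem, PadicInt.maximalIdeal_eq_span_p, ← Ideal.one_eq_top,
      Ideal.smul_eq_mul, mul_one, Ideal.span_singleton_pow]
    have h2 : (r m).coeff i - (r n).coeff i = -((r n).coeff i - (r m).coeff i) := by ring
    rw [h2]
    exact Submodule.neg_mem _ (hcoeff i m n hmn)
  choose L hLspec using hL
  refine ⟨∑ i ∈ Finset.range (f.natDegree), C (L i) * X ^ i, ?_⟩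
  intro n
  have key : C ((p : ℤ_[p]) ^ n) ∣ ((∑ i ∈ Finset.range (f.natDegree), C (L i) * X ^ i) - r n) := by
    rw [C_dvd_iff_dvd_coeff]
    intro i
    rw [Polynomial.coeff_sub, Polynomial.finset_sum_coeff]
    simp only [coeff_C_mul, coeff_X_pow, mul_ite, mul_one, mul_zero]
    rw [Finset.sum_ite_eq (Finset.range f.natDegree) i L]
    by_cases hi : i ∈ Finset.range f.natDegree
    · rw [if_pos hi]
      have := hLspec i n
      rw [SModEq.sub_mem, PadicInt.maximalIdeal_eq_span_p, ← Ideal.one_eq_top,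
        Ideal.smul_eq_mul, mul_one, Ideal.span_singleton_pow, Ideal.mem_span_singleton] at this
      obtain ⟨c, hc⟩ := this
      exact ⟨-c, by rw [← neg_sub ((r n).coeff i), hc]; ring⟩
    · rw [if_neg hi]
      have h0 : (r n).coeff i = 0 := by
        apply Polynomial.coeff_eq_zero_of_degree_lt
        calc (r n).degree < f.degree := degree_modByMonic_lt _ hf
        _ ≤ (i : WithBot ℕ) := by
            rw [Finset.mem_range, not_lt] at hi
            rw [hf.ne_zero |> Polynomial.degree_eq_natDegree]
            exact_mod_cast Nat.cast_le.mpr hi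
      rw [h0, zero_sub, dvd_neg]
      exact dvd_zero _
  have h2 : (∑ i ∈ Finset.range (f.natDegree), C (L i) * X ^ i) - e n =
      ((∑ i ∈ Finset.range (f.natDegree), C (L i) * X ^ i) - r n) - (e n - r n) := by ring
  rw [h2]
  exact Ideal.sub_mem _ (C_pow_dvd_mem_Jid f n key) (hre n n)

end Aux3

section Aux4
variable {p : ℕ} [Fact p.Prime] {f : Polynomial ℤ_[p]}

lemma map_toZMod_eq_zero_of_C_p_dvd {x : Polynomial ℤ_[p]}
    (h : C ((p : ℤ_[p])) ∣ x) : x.map (PadicInt.toZMod (p := p)) = 0 := by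
  obtain ⟨c, rfl⟩ := h
  rw [Polynomial.map_mul, map_C]
  have : PadicInt.toZMod (p := p) (p : ℤ_[p]) = 0 := by
    rw [← RingHom.mem_ker, PadicInt.ker_toZMod, PadicInt.maximalIdeal_eq_span_p,
      Ideal.mem_span_singleton]
  rw [this, map_zero, zero_mul]

lemma mem_Jid_one_iff {x : Polynomial ℤ_[p]} :
    x ∈ Jid f 1 ↔ (f.map (PadicInt.toZMod (p := p))) ∣ x.map (PadicInt.toZMod (p := p)) := by
  constructor
  · intro hx
    obtain ⟨s, t, rfl⟩ := (mem_Jid_iff f).mp hx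
    rw [Polynomial.map_add, Polynomial.map_mul, Polynomial.map_mul]
    have h0 : (C ((p : ℤ_[p]) ^ 1)).map (PadicInt.toZMod (p := p)) = 0 :=
      map_toZMod_eq_zero_of_C_p_dvd (by rw [pow_one])
    rw [h0, mul_zero, zero_add]
    exact Dvd.intro_left _ rfl
  · rintro ⟨T, hT⟩
    obtain ⟨t, ht⟩ := Polynomial.map_surjective (PadicInt.toZMod (p := p))
      (ZMod.ringHom_surjective _) T
    have hker : (x - f * t).map (PadicInt.toZMod (p := p)) = 0 := by
      rw [Polynomial.map_sub, Polynomial.map_mul, ht, ← hT, sub_self]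
    have hdvd : C ((p : ℤ_[p])) ∣ (x - f * t) := by
      rw [C_dvd_iff_dvd_coeff]
      intro i
      have : PadicInt.toZMod (p := p) ((x - f * t).coeff i) = 0 := by
        have h5 := congrArg (fun q => Polynomial.coeff q i) hker
        rw [← Polynomial.coeff_map]
        simpa using h5
      rw [← Ideal.mem_span_singleton, ← PadicInt.maximalIdeal_eq_span_p,
        ← PadicInt.ker_toZMod, RingHom.mem_ker]
      exact this
    obtain ⟨c, hc⟩ := hdvd
    rw [mem_Jid_iff]
    exact ⟨c, t, by rw [pow_one]; rw [sub_eq_iff_eq_add] at hc; rw [hc]; ring⟩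

end Aux4

section Main
variable {p : ℕ} [Fact p.Prime]

lemma no_coprime_factorization {f : Polynomial ℤ_[p]} (hf : f.Monic)
    (hirr : Irreducible f) {G H : Polynomial (ZMod p)}
    (hmap : f.map (PadicInt.toZMod (p := p)) = G * H)
    (hco : IsCoprime G H) (hG : ¬IsUnit G) (hH : ¬IsUnit H) : False := by
  obtain ⟨u, v, huv⟩ := hco
  -- lifts
  obtain ⟨u₀, hu₀⟩ := Polynomial.map_surjective (PadicInt.toZMod (p := p))
    (ZMod.ringHom_surjective _) u
  obtain ⟨g₀, hg₀⟩ := Polynomial.map_surjective (PadicInt.toZMod (p := p))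
    (ZMod.ringHom_surjective _) G
  set e₀ : Polynomial ℤ_[p] := u₀ * g₀ with he₀
  have he₀map : e₀.map (PadicInt.toZMod (p := p)) = u * G := by
    rw [he₀, Polynomial.map_mul, hu₀, hg₀]
  -- e₀ is idempotent mod (p, f)
  have hidem0 : e₀ ^ 2 - e₀ ∈ Jid f 1 := by
    rw [mem_Jid_one_iff]
    rw [Polynomial.map_sub, Polynomial.map_pow, he₀map]
    have h1 : (u * G) ^ 2 - u * G = -(u * v * (G * H)) := by
      have : v * H = 1 - u * G := by linear_combination huv
      calc (u * G) ^ 2 - u * G = -((u * G) * (1 - u * G)) := by ring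
      _ = -((u * G) * (v * H)) := by rw [this]
      _ = -(u * v * (G * H)) := by ring
    rw [h1, ← hmap]
    exact Dvd.dvd.neg_right ⟨u * v, by ring⟩
  -- Newton iteration
  set e : ℕ → Polynomial ℤ_[p] :=
    fun n => Nat.recOn n e₀ (fun _ b => 3 * b ^ 2 - 2 * b ^ 3) with he
  have hestep : ∀ n, e (n + 1) = 3 * (e n) ^ 2 - 2 * (e n) ^ 3 := fun n => rfl
  have hX : ∀ n, (e n) ^ 2 - e n ∈ Jid f (n + 1) := by
    intro n
    induction n with
    | zero => exact hidem0
    | succ n ih =>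
      have hid : (e (n+1)) ^ 2 - e (n+1) =
          ((e n) ^ 2 - e n) * (((e n) ^ 2 - e n) * ((1 - 2 * e n) ^ 2 - 4)) := by
        rw [hestep n]; ring
      rw [hid]
      have h2 : ((e n) ^ 2 - e n) * (((e n) ^ 2 - e n) * ((1 - 2 * e n) ^ 2 - 4)) ∈
          Jid f ((n + 1) + (n + 1)) :=
        Jid_mul f ih (Ideal.mul_mem_right _ _ ih)
      exact Jid_antitone f (by omega) h2
  have hdiff : ∀ n, e (n + 1) - e n ∈ Jid f (n + 1) := by
    intro n
    have hid : e (n + 1) - e n = ((e n) ^ 2 - e n) * (1 - 2 * e n) := by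
      rw [hestep n]; ring
    rw [hid]
    exact Ideal.mul_mem_right _ _ (hX n)
  -- limit
  obtain ⟨g, hg⟩ := exists_limit hf e hdiff
  -- g is idempotent mod f
  have hgid : f ∣ g ^ 2 - g := by
    apply mem_span_f_of_mem_all hf
    intro k
    have h1 : g ^ 2 - g = (g - e k) * (g + e k - 1) + ((e k) ^ 2 - e k) := by ring
    rw [h1]
    exact Ideal.add_mem _ (Ideal.mul_mem_right _ _ (hg k))
      (Jid_antitone f (by omega) (hX k))
  -- f is prime
  have hprime : Prime f := (UniqueFactorizationMonoid.irreducible_iff_prime).mp hirr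
  have hcases : f ∣ g ∨ f ∣ g - 1 := by
    have : f ∣ g * (g - 1) := by
      have : g * (g - 1) = g ^ 2 - g := by ring
      rw [this]; exact hgid
    exact hprime.2.2 _ _ this
  -- g ≡ e₀ mod (p, f)
  have hge₀ : g - e₀ ∈ Jid f 1 := by
    have h1 : g - e₀ = (g - e 1) + (e 1 - e 0) := by rw [show e 0 = e₀ from rfl]; ring
    rw [h1]
    exact Ideal.add_mem _ (hg 1) (hdiff 0)
  have hGne : G ≠ 0 := by
    intro h0
    have : (f.map (PadicInt.toZMod (p := p))) = 0 := by rw [hmap, h0, zero_mul]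
    exact (hf.map (f := (PadicInt.toZMod (p := p)))).ne_zero this
  have hHne : H ≠ 0 := by
    intro h0
    have : (f.map (PadicInt.toZMod (p := p))) = 0 := by rw [hmap, h0, mul_zero]
    exact (hf.map (f := (PadicInt.toZMod (p := p)))).ne_zero this
  rcases hcases with hc | hc
  · -- e₀ ∈ (p, f), so G*H ∣ u*G, so H unit
    have he₀J : e₀ ∈ Jid f 1 := by
      have hgJ : g ∈ Jid f 1 := by
        obtain ⟨w, hw⟩ := hc
        rw [hw]
        exact Ideal.mul_mem_right _ _ (f_mem_Jid f 1)
      have h1 : e₀ = g - (g - e₀) := by ring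
      rw [h1]
      exact Ideal.sub_mem _ hgJ hge₀
    have hdvd : G * H ∣ u * G := by
      rw [← hmap, ← he₀map]
      exact (mem_Jid_one_iff).mp he₀J
    obtain ⟨w, hw⟩ := hdvd
    have hu' : u = H * w := by
      have h2 : G * (u - H * w) = 0 := by linear_combination hw
      rcases mul_eq_zero.mp h2 with h | h
      · exact absurd h hGne
      · have := sub_eq_zero.mp h
        linear_combination this
    exact hH (IsUnit.of_mul_eq_one (a := H) (w * G + v)
      (by rw [hu'] at huv; linear_combination huv))
  · -- e₀ - 1 ∈ (p, f), so G*H ∣ v*H, so G unit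
    have he₀J : e₀ - 1 ∈ Jid f 1 := by
      have hgJ : g - 1 ∈ Jid f 1 := by
        obtain ⟨w, hw⟩ := hc
        rw [hw]
        exact Ideal.mul_mem_right _ _ (f_mem_Jid f 1)
      have h1 : e₀ - 1 = (g - 1) - (g - e₀) := by ring
      rw [h1]
      exact Ideal.sub_mem _ hgJ hge₀
    have hdvd : G * H ∣ v * H := by
      rw [← hmap]
      have hm : (e₀ - (1:Polynomial ℤ_[p])).map (PadicInt.toZMod (p := p)) = u * G - 1 := by
        rw [Polynomial.map_sub, he₀map, Polynomial.map_one]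
      have h3 := (mem_Jid_one_iff).mp he₀J
      rw [hm] at h3
      have h4 : v * H = -(u * G - 1) := by linear_combination huv
      rw [h4]
      exact h3.neg_right
    obtain ⟨w, hw⟩ := hdvd
    have hv' : v = G * w := by
      have h2 : H * (v - G * w) = 0 := by linear_combination hw
      rcases mul_eq_zero.mp h2 with h | h
      · exact absurd h hHne
      · have := sub_eq_zero.mp h
        linear_combination this
    exact hG (IsUnit.of_mul_eq_one (a := G) (u + w * H)
      (by rw [hv'] at huv; linear_combination huv))

end Main

/-- If `f ∈ ℤ_p[X]` is monic and irreducible, then its reduction mod `p` is a power of a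
single monic irreducible polynomial in `𝔽_p[X]`. -/
theorem reduction_of_irreducible_is_prime_power (p : ℕ) [Fact p.Prime]
    (f : Polynomial ℤ_[p]) (hf : f.Monic) (hirr : Irreducible f) :
    ∃ ψ : Polynomial (ZMod p), ψ.Monic ∧ Irreducible ψ ∧
      ∃ n : ℕ, f.map (PadicInt.toZMod (p := p)) = ψ ^ n := by
  set F := f.map (PadicInt.toZMod (p := p)) with hF
  have hFmonic : F.Monic := hf.map _
  have hFne : F ≠ 0 := hFmonic.ne_zero
  have hdeg : 0 < f.natDegree := by
    rcases Nat.eq_zero_or_pos f.natDegree with h0 | h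
    · exfalso
      have : f = 1 := hf.natDegree_eq_zero.mp h0
      exact hirr.not_isUnit (this ▸ isUnit_one)
    · exact h
  have hFdeg : 0 < F.natDegree := by
    rwa [hF, hf.natDegree_map]
  have hFnotunit : ¬IsUnit F := by
    intro hu
    have : F = 1 := hFmonic.isUnit_iff.mp hu
    rw [this, natDegree_one] at hFdeg
    exact absurd hFdeg (lt_irrefl 0)
  obtain ⟨ψ₀, hψ₀irr, hψ₀dvd⟩ := WfDvdMonoid.exists_irreducible_factor hFnotunit hFne
  set ψ := normalize ψ₀ with hψdef
  have hψne : ψ₀ ≠ 0 := hψ₀irr.ne_zero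
  have hψmonic : ψ.Monic := Polynomial.monic_normalize hψne
  have hψirr : Irreducible ψ := (normalize_associated ψ₀).symm.irreducible hψ₀irr
  have hψdvd : ψ ∣ F := (normalize_dvd_iff).mpr hψ₀dvd
  have hψdegpos : 0 < ψ.degree := Polynomial.degree_pos_of_irreducible hψirr
  have hfin : FiniteMultiplicity ψ F :=
    finiteMultiplicity_of_degree_pos_of_monic hψdegpos hψmonic hFne
  obtain ⟨h, hfact, hndvd⟩ := hfin.exists_eq_pow_mul_and_not_dvd
  set n := multiplicity ψ F with hn
  have hn0 : n ≠ 0 := multiplicity_ne_zero.mpr hψdvd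
  have hco : IsCoprime (ψ ^ n) h :=
    IsCoprime.pow_left ((hψirr.coprime_iff_not_dvd).mpr hndvd)
  by_cases hunit : IsUnit h
  · -- h is a unit; by monicity h = 1
    have hψnm : (ψ ^ n).Monic := hψmonic.pow _
    have hlc : h.leadingCoeff = 1 := by
      have h1 : F.leadingCoeff = (ψ ^ n).leadingCoeff * h.leadingCoeff := by
        rw [hfact, Polynomial.leadingCoeff_mul]
      rw [hFmonic.leadingCoeff, hψnm.leadingCoeff, one_mul] at h1
      exact h1.symm
    have hdeg0 : h.degree = 0 := Polynomial.degree_eq_zero_of_isUnit hunit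
    have : h = 1 := by
      have := Polynomial.eq_C_of_degree_le_zero (le_of_eq hdeg0)
      rw [this] at hlc ⊢
      rw [Polynomial.leadingCoeff_C] at hlc
      rw [hlc, map_one]
    rw [this, mul_one] at hfact
    exact ⟨ψ, hψmonic, hψirr, n, hfact⟩
  · exfalso
    have hGnotunit : ¬IsUnit (ψ ^ n) := by
      intro hu
      exact hψirr.not_isUnit (isUnit_of_dvd_unit (dvd_pow_self ψ hn0) hu)
    exact no_coprime_factorization hf hirr hfact hco hGnotunit hunit
end

section
/- Let p be a prime, f ∈ ℤ_p[X] monic and irreducible with root α generating 𝕂 = ℚ_p(α), such that f̄ = φ̄^l mod p for a monic φ with irreducible reduction, and f satisfies the L_{φ,λ} property with λ = ν_p(a_l)/l. Then the unique valuation w of 𝕂 extending ν_p satisfies w(φ(α)) = λ. -/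
open Polynomial

lemma nsmul_coe_wt (n : ℕ) (q : ℚ) : n • ((q : WithTop ℚ)) = (((n : ℚ) * q : ℚ) : WithTop ℚ) := by
  induction n with
  | zero => simp
  | succ n ih =>
    rw [succ_nsmul, ih, ← WithTop.coe_add, WithTop.coe_inj]
    push_cast
    ring

section Aux
variable {p : ℕ} [Fact p.Prime] {K : Type*} [Field K] [Algebra ℚ_[p] K]

/-- evaluation of an integral polynomial at α -/
noncomputable def evalHom (α : K) : Polynomial ℤ_[p] →+* K :=
  ((aeval α).toRingHom : Polynomial ℚ_[p] →+* K).comp (mapRingHom (PadicInt.Coe.ringHom (p := p)))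

lemma evalHom_apply (α : K) (P : Polynomial ℤ_[p]) :
    evalHom α P = aeval α (P.map (PadicInt.Coe.ringHom (p := p))) := rfl

lemma evalHom_eq_sum (α : K) (P : Polynomial ℤ_[p]) :
    evalHom α P = ∑ j ∈ P.support, algebraMap ℚ_[p] K (P.coeff j : ℚ_[p]) * α ^ j := by
  rw [evalHom_apply, aeval_def, eval₂_map, eval₂_eq_sum, Polynomial.sum_def]
  rfl

variable (w : AddValuation K (WithTop ℚ))

lemma wt_alg_nonneg
    (hw : ∀ x : ℚ_[p], x ≠ 0 → w (algebraMap ℚ_[p] K x) = ((x.valuation : ℚ) : WithTop ℚ))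
    (c : ℤ_[p]) : ((c.valuation : ℚ) : WithTop ℚ) ≤ w (algebraMap ℚ_[p] K (c : ℚ_[p])) := by
  by_cases hc : c = 0
  · simp [hc]
  · rw [hw _ (fun h => hc (Subtype.coe_injective h))]
    exact le_of_eq (by simp)

lemma wt_eval_ge
    (hw : ∀ x : ℚ_[p], x ≠ 0 → w (algebraMap ℚ_[p] K x) = ((x.valuation : ℚ) : WithTop ℚ))
    (α : K) (hα : 0 ≤ w α) (P : Polynomial ℤ_[p]) (c : WithTop ℚ)
    (hc : ∀ j ∈ P.support, c ≤ (((P.coeff j).valuation : ℚ) : WithTop ℚ)) :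
    c ≤ w (evalHom α P) := by
  rw [evalHom_eq_sum]
  refine w.map_le_sum fun j hj => ?_
  rw [w.map_mul, w.map_pow]
  calc c = c + 0 := (add_zero c).symm
    _ ≤ w (algebraMap ℚ_[p] K (P.coeff j : ℚ_[p])) + j • w α :=
      add_le_add ((hc j hj).trans (wt_alg_nonneg w hw _)) (nsmul_nonneg hα j)

lemma wt_eval_nonneg
    (hw : ∀ x : ℚ_[p], x ≠ 0 → w (algebraMap ℚ_[p] K x) = ((x.valuation : ℚ) : WithTop ℚ))
    (α : K) (hα : 0 ≤ w α) (P : Polynomial ℤ_[p]) : 0 ≤ w (evalHom α P) := by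
  refine wt_eval_ge w hw α hα P 0 fun j _ => ?_
  exact_mod_cast Nat.zero_le (P.coeff j).valuation

lemma wt_root_nonneg
    (hw : ∀ x : ℚ_[p], x ≠ 0 → w (algebraMap ℚ_[p] K x) = ((x.valuation : ℚ) : WithTop ℚ))
    (f : Polynomial ℤ_[p]) (hf : f.Monic) (α : K)
    (hroot : Polynomial.aeval α (f.map (PadicInt.Coe.ringHom (p := p))) = 0) :
    0 ≤ w α := by
  by_contra hcon
  push_neg at hcon
  set F := f.map (PadicInt.Coe.ringHom (p := p)) with hF
  have hFm : F.Monic := hf.map _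
  set n := F.natDegree with hn
  have hn1 : 1 ≤ n := by
    by_contra hn0
    push_neg at hn0
    interval_cases n
    · have : F = 1 := hFm.natDegree_eq_zero.1 hn.symm
      rw [this] at hroot
      simp at hroot
  obtain ⟨q, hq⟩ : ∃ q : ℚ, w α = (q : WithTop ℚ) := by
    rcases WithTop.ne_top_iff_exists.1 hcon.ne_top with ⟨q, hq⟩
    exact ⟨q, hq.symm⟩
  have hq0 : q < 0 := by
    rw [hq] at hcon
    exact_mod_cast hcon
  have hsum : Polynomial.aeval α F
      = ∑ i ∈ Finset.range n, F.coeff i • α ^ i + α ^ n := by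
    rw [Polynomial.aeval_eq_sum_range, Finset.sum_range_succ, hFm.coeff_natDegree, one_smul]
  have heq : α ^ n = -∑ i ∈ Finset.range n, F.coeff i • α ^ i := by
    rw [hroot] at hsum
    exact eq_neg_of_add_eq_zero_right hsum.symm
  have hlt : (((n : ℚ) * q : ℚ) : WithTop ℚ) < w (∑ i ∈ Finset.range n, F.coeff i • α ^ i) := by
    refine w.map_lt_sum (WithTop.coe_ne_top) fun i hi => ?_
    have hiq : (n : ℚ) * q < (i : ℚ) * q := by
      have : (i : ℚ) < n := by exact_mod_cast Finset.mem_range.1 hi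
      nlinarith
    have hcoeff : F.coeff i = ((f.coeff i : ℚ_[p])) := by
      rw [hF, Polynomial.coeff_map]; rfl
    rw [Algebra.smul_def, w.map_mul, w.map_pow, hq, nsmul_coe_wt]
    calc (((n : ℚ) * q : ℚ) : WithTop ℚ) < (((i : ℚ) * q : ℚ) : WithTop ℚ) := by
          exact_mod_cast hiq
      _ = 0 + (((i : ℚ) * q : ℚ) : WithTop ℚ) := (zero_add _).symm
      _ ≤ _ := by
          refine add_le_add ?_ le_rfl
          rw [hcoeff]
          exact le_trans (by exact_mod_cast Nat.zero_le (f.coeff i).valuation)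
            (wt_alg_nonneg w hw _)
  have hws : w (∑ i ∈ Finset.range n, F.coeff i • α ^ i) = w (α ^ n) := by
    rw [heq, w.map_neg]
  rw [hws, w.map_pow, hq, nsmul_coe_wt] at hlt
  exact lt_irrefl _ hlt

lemma wt_unitpart
    (hw : ∀ x : ℚ_[p], x ≠ 0 → w (algebraMap ℚ_[p] K x) = ((x.valuation : ℚ) : WithTop ℚ))
    (α : K) (hα : 0 ≤ w α) (φ g : Polynomial ℤ_[p])
    (hφirr : Irreducible (φ.map (PadicInt.toZMod (p := p))))
    (ht : 0 < w (evalHom α φ))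
    (hg0 : g.map (PadicInt.toZMod (p := p)) ≠ 0)
    (hgdeg : (g.map (PadicInt.toZMod (p := p))).degree
      < (φ.map (PadicInt.toZMod (p := p))).degree) :
    w (evalHom α g) = 0 := by
  haveI : NeZero p := ⟨(Fact.out : p.Prime).ne_zero⟩
  have h0 : 0 ≤ w (evalHom α g) := wt_eval_nonneg w hw α hα g
  by_contra hne
  have hgt : 0 < w (evalHom α g) := lt_of_le_of_ne h0 (Ne.symm hne)
  have hnd : ¬ (φ.map (PadicInt.toZMod (p := p)) ∣ g.map (PadicInt.toZMod (p := p))) :=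
    fun hd => hg0 (Polynomial.eq_zero_of_dvd_of_degree_lt hd hgdeg)
  obtain ⟨u, s, huv⟩ := (hφirr.coprime_iff_not_dvd).2 hnd
  have hsurj : Function.Surjective (PadicInt.toZMod (p := p)) := fun z =>
    ⟨((z.val : ℕ) : ℤ_[p]), by rw [map_natCast]; exact ZMod.natCast_rightInverse z⟩
  obtain ⟨U, hU⟩ := Polynomial.map_surjective _ hsurj u
  obtain ⟨V, hV⟩ := Polynomial.map_surjective _ hsurj s
  have hmap : (U * φ + V * g - 1).map (PadicInt.toZMod (p := p)) = 0 := by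
    simp only [Polynomial.map_sub, Polynomial.map_add, Polynomial.map_mul, Polynomial.map_one,
      hU, hV]
    rw [sub_eq_zero, huv]
  have hdvd : Polynomial.C ((p : ℤ_[p])) ∣ (U * φ + V * g - 1) := by
    rw [Polynomial.C_dvd_iff_dvd_coeff]
    intro i
    have : PadicInt.toZMod ((U * φ + V * g - 1).coeff i) = 0 := by
      rw [← Polynomial.coeff_map, hmap, Polynomial.coeff_zero]
    have hker : (U * φ + V * g - 1).coeff i ∈ RingHom.ker (PadicInt.toZMod (p := p)) := this
    rw [PadicInt.ker_toZMod, PadicInt.maximalIdeal_eq_span_p, Ideal.mem_span_singleton] at hker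
    exact hker
  obtain ⟨R, hR⟩ := hdvd
  have heq : evalHom α U * evalHom α φ + evalHom α V * evalHom α g
      = 1 + algebraMap ℚ_[p] K ((p : ℤ_[p]) : ℚ_[p]) * evalHom α R := by
    have := congrArg (evalHom (p := p) α) hR
    simp only [map_sub, map_add, map_mul, map_one] at this
    have hCp : evalHom (p := p) α (Polynomial.C ((p : ℤ_[p])))
        = algebraMap ℚ_[p] K ((p : ℤ_[p]) : ℚ_[p]) := by
      rw [evalHom_apply, Polynomial.map_C, Polynomial.aeval_C]; rfl
    rw [hCp] at this
    linear_combination (norm := ring_nf) this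
  have hwp : w (algebraMap ℚ_[p] K ((p : ℤ_[p]) : ℚ_[p])) = ((1 : ℚ) : WithTop ℚ) := by
    have hcast : ((p : ℤ_[p]) : ℚ_[p]) = ((p : ℚ_[p])) := by push_cast; rfl
    rw [hcast, hw _ ((Nat.cast_ne_zero (R := ℚ_[p])).2 (Fact.out : p.Prime).ne_zero)]
    norm_cast
    simp [Padic.valuation_p]
  have hRHS : w (1 + algebraMap ℚ_[p] K ((p : ℤ_[p]) : ℚ_[p]) * evalHom α R) = 0 := by
    rw [w.map_add_eq_of_lt_left, w.map_one]
    rw [w.map_one, w.map_mul, hwp]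
    calc (0 : WithTop ℚ) < ((1:ℚ) : WithTop ℚ) := by exact_mod_cast one_pos
      _ ≤ ((1:ℚ) : WithTop ℚ) + w (evalHom α R) :=
        le_add_of_nonneg_right (wt_eval_nonneg w hw α hα R)
  have hLHS : 0 < w (evalHom α U * evalHom α φ + evalHom α V * evalHom α g) := by
    refine w.map_lt_add ?_ ?_
    · rw [w.map_mul]
      calc (0 : WithTop ℚ) < w (evalHom α φ) := ht
        _ ≤ w (evalHom α φ) + w (evalHom α U) := le_add_of_nonneg_right (wt_eval_nonneg w hw α hα U)
        _ = w (evalHom α U) + w (evalHom α φ) := add_comm _ _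
    · rw [w.map_mul]
      calc (0 : WithTop ℚ) < w (evalHom α g) := hgt
        _ ≤ w (evalHom α g) + w (evalHom α V) := le_add_of_nonneg_right (wt_eval_nonneg w hw α hα V)
        _ = w (evalHom α V) + w (evalHom α g) := add_comm _ _
  rw [heq, hRHS] at hLHS
  exact lt_irrefl _ hLHS


lemma wt_evalC_p
    (hw : ∀ x : ℚ_[p], x ≠ 0 → w (algebraMap ℚ_[p] K x) = ((x.valuation : ℚ) : WithTop ℚ))
    (α : K) : w (evalHom α (Polynomial.C ((p : ℤ_[p])))) = ((1 : ℚ) : WithTop ℚ) := by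
  have hCp : evalHom (p := p) α (Polynomial.C ((p : ℤ_[p])))
      = algebraMap ℚ_[p] K ((p : ℤ_[p]) : ℚ_[p]) := by
    rw [evalHom_apply, Polynomial.map_C, Polynomial.aeval_C]; rfl
  have hcast : ((p : ℤ_[p]) : ℚ_[p]) = ((p : ℚ_[p])) := by push_cast; rfl
  rw [hCp, hcast, hw _ ((Nat.cast_ne_zero (R := ℚ_[p])).2 (Fact.out : p.Prime).ne_zero)]
  norm_cast
  simp [Padic.valuation_p]

end Aux

/-- Let `f ∈ ℤ_p[X]` be monic, irreducible over `ℚ_p`, with root `α` generating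
`𝕂 = ℚ_p(α)`, such that `f̄ = φ̄^l` for a monic `φ` with irreducible reduction, and
suppose `f` satisfies the `L_{φ,λ}` property with `λ = ν_p(a_l)/l = v/l`.  Then the
(unique) valuation `w` of `𝕂` extending `ν_p` satisfies `w(φ(α)) = λ`. -/
theorem valuation_phi_alpha_eq_slope (p : ℕ) [Fact p.Prime]
    (f φ : Polynomial ℤ_[p]) (hf : f.Monic) (hφ : φ.Monic)
    (hirr : Irreducible (f.map (PadicInt.Coe.ringHom (p := p))))
    (hφirr : Irreducible (φ.map (PadicInt.toZMod (p := p))))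
    (l : ℕ) (hl : 0 < l)
    (hfbar : f.map (PadicInt.toZMod (p := p)) = (φ.map (PadicInt.toZMod (p := p))) ^ l)
    -- the φ-adic expansion f = φ^l + a_1 φ^{l-1} + ⋯ + a_l
    (a : ℕ → Polynomial ℤ_[p]) (ha0 : a 0 = 1)
    (hexp : f = ∑ i ∈ Finset.range (l + 1), a i * φ ^ (l - i))
    (hdeg : ∀ i ≤ l, (a i).degree < φ.degree)
    -- λ = v/l with v = ν_p(a_l), and f satisfies the L_{φ,λ} property
    (v : ℕ) (hv : gaussVal p (a l) = (v : ℕ∞))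
    (hLprop : ∀ i, 1 ≤ i → i ≤ l → (i : ℕ∞) * (v : ℕ∞) ≤ (l : ℕ∞) * gaussVal p (a i))
    (K : Type*) [Field K] [Algebra ℚ_[p] K]
    (α : K) (hroot : Polynomial.aeval α (f.map (PadicInt.Coe.ringHom (p := p))) = 0)
    (hgen : Algebra.adjoin ℚ_[p] ({α} : Set K) = ⊤)
    -- w is a valuation of K extending ν_p
    (w : AddValuation K (WithTop ℚ))
    (hw : ∀ x : ℚ_[p], x ≠ 0 →
      w (algebraMap ℚ_[p] K x) = ((x.valuation : ℚ) : WithTop ℚ)) :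
    w (Polynomial.aeval α (φ.map (PadicInt.Coe.ringHom (p := p))))
      = (((v : ℚ) / (l : ℚ)) : WithTop ℚ) := by
  classical
  rw [← evalHom_apply (p := p) α φ]
  -- basic setup
  have hα : 0 ≤ w α := wt_root_nonneg w hw f hf α hroot
  have hAf : evalHom (p := p) α f = 0 := hroot
  set Φ : Polynomial (ZMod p) := φ.map (PadicInt.toZMod (p := p)) with hΦdef
  have hΦm : Φ.Monic := hφ.map _
  have hΦdeg : Φ.degree = φ.degree := hφ.degree_map _
  -- coefficient bounds for a l
  have hvle : ∀ j ∈ (a l).support, (v : ℤ) ≤ ((a l).coeff j).valuation := by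
    intro j hj
    have h1 : gaussVal p (a l) ≤ (((a l).coeff j).valuation : ℕ∞) := by
      unfold gaussVal
      exact iInf₂_le j hj
    rw [hv] at h1
    have h2 : v ≤ ((a l).coeff j).valuation := by exact_mod_cast h1
    have h3 := Nat.zero_le ((a l).coeff j).valuation
    omega
  have hsupp : (a l).support.Nonempty := by
    by_contra h
    rw [Finset.not_nonempty_iff_eq_empty] at h
    have : gaussVal p (a l) = ⊤ := by
      unfold gaussVal
      rw [h]
      simp
    rw [hv] at this
    exact (ENat.coe_ne_top v) this
  have hal0 : a l ≠ 0 := Polynomial.support_nonempty.1 hsupp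
  obtain ⟨j0, hj0mem, hj0⟩ : ∃ j ∈ (a l).support, ((a l).coeff j).valuation = (v : ℤ) := by
    have hinf : gaussVal p (a l)
        = (a l).support.inf (fun i => (((a l).coeff i).valuation : ℕ∞)) := by
      unfold gaussVal
      rw [Finset.inf_eq_iInf]
    obtain ⟨j0, hj0mem, hj0⟩ := Finset.exists_mem_eq_inf (a l).support hsupp
      (fun i => ((((a l).coeff i).valuation : ℕ∞)))
    refine ⟨j0, hj0mem, ?_⟩
    rw [hinf, hj0] at hv
    have h2 : ((a l).coeff j0).valuation = v := by exact_mod_cast hv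
    have h3 := Nat.zero_le ((a l).coeff j0).valuation
    omega
  -- v ≥ 1
  have hv1 : 1 ≤ v := by
    have hbar := congrArg (Polynomial.map (PadicInt.toZMod (p := p))) hexp
    rw [hfbar, Polynomial.map_sum] at hbar
    simp only [Polynomial.map_mul, Polynomial.map_pow, ← hΦdef] at hbar
    rw [Finset.sum_range_succ, Nat.sub_self, pow_zero, mul_one] at hbar
    have halbar : (a l).map (PadicInt.toZMod (p := p))
        = Φ ^ l - ∑ i ∈ Finset.range l, (a i).map (PadicInt.toZMod (p := p)) * Φ ^ (l - i) := by
      rw [hbar]; ring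
    have hdvdΦ : Φ ∣ (a l).map (PadicInt.toZMod (p := p)) := by
      rw [halbar]
      refine dvd_sub (dvd_pow_self Φ hl.ne') (Finset.dvd_sum fun i hi => ?_)
      exact ((dvd_pow_self Φ (Nat.sub_ne_zero_of_lt (Finset.mem_range.1 hi))).mul_left _)
    have hbl0 : (a l).map (PadicInt.toZMod (p := p)) = 0 := by
      refine Polynomial.eq_zero_of_dvd_of_degree_lt hdvdΦ ?_
      calc ((a l).map (PadicInt.toZMod (p := p))).degree ≤ (a l).degree :=
            Polynomial.degree_map_le
        _ < φ.degree := hdeg l le_rfl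
        _ = Φ.degree := hΦdeg.symm
    have hz : PadicInt.toZMod ((a l).coeff j0) = 0 := by
      rw [← Polynomial.coeff_map, hbl0, Polynomial.coeff_zero]
    have hker : (a l).coeff j0 ∈ RingHom.ker (PadicInt.toZMod (p := p)) := hz
    rw [PadicInt.ker_toZMod, PadicInt.maximalIdeal_eq_span_p] at hker
    have hne : (a l).coeff j0 ≠ 0 := Polynomial.mem_support_iff.1 hj0mem
    have : (1 : ℤ) ≤ ((a l).coeff j0).valuation := by
      have := (PadicInt.mem_span_pow_iff_le_valuation _ hne 1).1 (by rwa [pow_one])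
      exact_mod_cast this
    omega
  -- L7: lower bound on w(A(a i))
  have hL7 : ∀ i, 1 ≤ i → i ≤ l →
      ((((i : ℚ) * v / l : ℚ)) : WithTop ℚ) ≤ w (evalHom α (a i)) := by
    intro i h1 h2
    refine wt_eval_ge w hw α hα (a i) _ fun j hj => ?_
    have hg : gaussVal p (a i) ≤ (((a i).coeff j).valuation : ℕ∞) := by
      unfold gaussVal
      exact iInf₂_le j hj
    have hLi := hLprop i h1 h2
    have hmul : ((i * v : ℕ) : ℕ∞) ≤ ((l * ((a i).coeff j).valuation : ℕ) : ℕ∞) := by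
      push_cast
      exact le_trans hLi (mul_le_mul_right hg _)
    have hnat : i * v ≤ l * ((a i).coeff j).valuation := by exact_mod_cast hmul
    have hq : (i : ℚ) * v / l ≤ (((a i).coeff j).valuation : ℚ) := by
      rw [div_le_iff₀ (by exact_mod_cast hl : (0 : ℚ) < (l : ℚ))]
      calc (i : ℚ) * v = ((i * v : ℕ) : ℚ) := by push_cast; ring
        _ ≤ ((l * ((a i).coeff j).valuation : ℕ) : ℚ) := by exact_mod_cast hnat
        _ = (((a i).coeff j).valuation : ℚ) * l := by push_cast; ring
    have hval : ((((a i).coeff j).valuation : ℚ)) = (((a i).coeff j).valuation : ℚ) := by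
      rfl
    rw [hval] at hq
    exact_mod_cast hq
  -- the evaluated equation
  have hEA : (0 : K) = ∑ i ∈ Finset.range (l + 1),
      evalHom (p := p) α (a i) * (evalHom (p := p) α φ) ^ (l - i) := by
    have := congrArg (evalHom (p := p) α) hexp
    rw [hAf, map_sum] at this
    simp only [map_mul, map_pow] at this
    exact this
  -- Step A : ¬ t < v/l
  have stepA : ¬ (w (evalHom (p := p) α φ) < (((v : ℚ) / (l : ℚ)) : WithTop ℚ)) := by
    intro hlt
    obtain ⟨q, hq⟩ : ∃ q : ℚ, w (evalHom (p := p) α φ) = (q : WithTop ℚ) := by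
      rcases WithTop.ne_top_iff_exists.1 hlt.ne_top with ⟨q, hq⟩
      exact ⟨q, hq.symm⟩
    have hqlt : q < (v : ℚ) / l := by rw [hq] at hlt; exact_mod_cast hlt
    have hE0 : (evalHom (p := p) α φ) ^ l
        = -∑ i ∈ Finset.range l,
            evalHom (p := p) α (a (i + 1)) * (evalHom (p := p) α φ) ^ (l - (i + 1)) := by
      rw [Finset.sum_range_succ'] at hEA
      rw [ha0, map_one, one_mul, Nat.sub_zero] at hEA
      exact eq_neg_of_add_eq_zero_right hEA.symm
    have hlt2 : (((l : ℚ) * q : ℚ) : WithTop ℚ) < w (∑ i ∈ Finset.range l,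
        evalHom (p := p) α (a (i + 1)) * (evalHom (p := p) α φ) ^ (l - (i + 1))) := by
      refine w.map_lt_sum (WithTop.coe_ne_top) fun i hi => ?_
      have hil : i < l := Finset.mem_range.1 hi
      rw [w.map_mul, w.map_pow, hq, nsmul_coe_wt]
      have hbound := hL7 (i + 1) (Nat.le_add_left 1 i) hil
      have harith : (l : ℚ) * q < ((i + 1 : ℕ) : ℚ) * v / l + ((l - (i + 1) : ℕ) : ℚ) * q := by
        have hd : ((l - (i + 1) : ℕ) : ℚ) = (l : ℚ) - (i + 1 : ℕ) := by
          rw [Nat.cast_sub hil]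
        rw [hd]
        have hlq : (0 : ℚ) < (l : ℚ) := by exact_mod_cast hl
        have hi1 : ((i + 1 : ℕ) : ℚ) ≤ (l : ℚ) := by exact_mod_cast hil
        have hi0 : (0 : ℚ) < ((i + 1 : ℕ) : ℚ) := by positivity
        have key : ((i + 1 : ℕ) : ℚ) * q < ((i + 1 : ℕ) : ℚ) * ((v : ℚ) / l) :=
          (mul_lt_mul_iff_right₀ hi0).2 hqlt
        rw [mul_div_assoc]
        nlinarith [key]
      calc (((l : ℚ) * q : ℚ) : WithTop ℚ)
          < ((((i + 1 : ℕ) : ℚ) * v / l + ((l - (i + 1) : ℕ) : ℚ) * q : ℚ) : WithTop ℚ) := by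
            exact_mod_cast harith
        _ ≤ w (evalHom α (a (i + 1))) + ((((l - (i + 1) : ℕ) : ℚ) * q : ℚ) : WithTop ℚ) := by
            rw [WithTop.coe_add]
            exact add_le_add hbound le_rfl
    rw [← w.map_neg, ← hE0, w.map_pow, hq, nsmul_coe_wt] at hlt2
    exact lt_irrefl _ hlt2
  -- positivity of t
  have hvl_pos : (0 : ℚ) < (v : ℚ) / l := by
    apply div_pos
    · exact_mod_cast hv1
    · exact_mod_cast hl
  have ht_ge : (((v : ℚ) / (l : ℚ)) : WithTop ℚ) ≤ w (evalHom (p := p) α φ) := not_lt.1 stepA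
  have ht_pos : 0 < w (evalHom (p := p) α φ) := by
    calc (0 : WithTop ℚ) < (((v : ℚ) / (l : ℚ)) : WithTop ℚ) := by exact_mod_cast hvl_pos
      _ ≤ _ := ht_ge
  -- decomposition a l = C(p^v) * b
  have hdvd : Polynomial.C ((p : ℤ_[p]) ^ v) ∣ a l := by
    rw [Polynomial.C_dvd_iff_dvd_coeff]
    intro j
    by_cases hj : (a l).coeff j = 0
    · rw [hj]; exact dvd_zero _
    · have hjs : j ∈ (a l).support := Polynomial.mem_support_iff.2 hj
      have h1 := hvle j hjs
      have h2 := (PadicInt.mem_span_pow_iff_le_valuation _ hj v).2 (by exact_mod_cast h1)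
      rwa [Ideal.mem_span_singleton] at h2
  obtain ⟨b, hb⟩ := hdvd
  have hbj0 : b.coeff j0 ≠ 0 := by
    intro h
    have : (a l).coeff j0 = 0 := by rw [hb, Polynomial.coeff_C_mul, h, mul_zero]
    exact Polynomial.mem_support_iff.1 hj0mem this
  have hbval : (b.coeff j0).valuation = 0 := by
    have h1 : (a l).coeff j0 = (p : ℤ_[p]) ^ v * b.coeff j0 := by
      rw [hb, Polynomial.coeff_C_mul]
    have h2 := PadicInt.valuation_p_pow_mul v (b.coeff j0) hbj0
    rw [← h1] at h2
    omega
  have hbbar0 : b.map (PadicInt.toZMod (p := p)) ≠ 0 := by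
    intro h
    have hz : PadicInt.toZMod (b.coeff j0) = 0 := by
      rw [← Polynomial.coeff_map, h, Polynomial.coeff_zero]
    have hker : b.coeff j0 ∈ RingHom.ker (PadicInt.toZMod (p := p)) := hz
    rw [PadicInt.ker_toZMod, PadicInt.maximalIdeal_eq_span_p] at hker
    have h1 := (PadicInt.mem_span_pow_iff_le_valuation _ hbj0 1).1 (by rwa [pow_one])
    rw [hbval] at h1
    exact absurd h1 (by norm_num)
  have hb0 : b ≠ 0 := fun h => hbj0 (by rw [h, Polynomial.coeff_zero])
  have hp0 : (p : ℤ_[p]) ≠ 0 := (Nat.cast_ne_zero (R := ℤ_[p])).2 (Fact.out : p.Prime).ne_zero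
  have hbdeg : (b.map (PadicInt.toZMod (p := p))).degree < Φ.degree := by
    calc (b.map (PadicInt.toZMod (p := p))).degree ≤ b.degree := Polynomial.degree_map_le
      _ = (a l).degree := by rw [hb, Polynomial.degree_C_mul (pow_ne_zero v hp0)]
      _ < φ.degree := hdeg l le_rfl
      _ = Φ.degree := hΦdeg.symm
  have hwb : w (evalHom α b) = 0 :=
    wt_unitpart w hw α hα φ b hφirr ht_pos hbbar0 hbdeg
  have hwal : w (evalHom (p := p) α (a l)) = (((v : ℚ)) : WithTop ℚ) := by
    have hC : Polynomial.C ((p : ℤ_[p]) ^ v) = (Polynomial.C ((p : ℤ_[p]))) ^ v := by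
      rw [map_pow]
    rw [hb, hC, map_mul, map_pow, w.map_mul, w.map_pow, wt_evalC_p w hw α, hwb, add_zero,
      nsmul_coe_wt]
    norm_num
  -- Step B : t ≤ v/l
  have stepB : w (evalHom (p := p) α φ) ≤ (((v : ℚ) / (l : ℚ)) : WithTop ℚ) := by
    by_contra hgt
    push_neg at hgt
    have hE1 : evalHom (p := p) α (a l) = -∑ i ∈ Finset.range l,
        evalHom (p := p) α (a i) * (evalHom (p := p) α φ) ^ (l - i) := by
      rw [Finset.sum_range_succ, Nat.sub_self, pow_zero, mul_one] at hEA
      exact eq_neg_of_add_eq_zero_right hEA.symm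
    by_cases htop : w (evalHom (p := p) α φ) = ⊤
    · have hφ0 : evalHom (p := p) α φ = 0 := w.top_iff.1 htop
      have hzero : evalHom (p := p) α (a l) = 0 := by
        rw [hE1, Finset.sum_eq_zero, neg_zero]
        intro i hi
        rw [hφ0, zero_pow (Nat.sub_ne_zero_of_lt (Finset.mem_range.1 hi)), mul_zero]
      rw [hzero, w.map_zero] at hwal
      exact (WithTop.coe_ne_top) hwal.symm
    obtain ⟨q, hq⟩ := WithTop.ne_top_iff_exists.1 htop
    have hqgt : (v : ℚ) / l < q := by
      rw [← hq] at hgt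
      exact_mod_cast hgt
    have hlq : (0 : ℚ) < (l : ℚ) := by exact_mod_cast hl
    have hlt2 : (((v : ℚ)) : WithTop ℚ) < w (∑ i ∈ Finset.range l,
        evalHom (p := p) α (a i) * (evalHom (p := p) α φ) ^ (l - i)) := by
      refine w.map_lt_sum (WithTop.coe_ne_top) fun i hi => ?_
      have hil : i < l := Finset.mem_range.1 hi
      rcases Nat.eq_zero_or_pos i with hi0 | hi1
      · subst hi0
        rw [ha0, map_one, one_mul, w.map_pow, ← hq, nsmul_coe_wt, Nat.sub_zero]
        have : (v : ℚ) < (l : ℚ) * q := by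
          have := (div_lt_iff₀ hlq).1 hqgt
          linarith
        exact_mod_cast this
      · rw [w.map_mul, w.map_pow, ← hq, nsmul_coe_wt]
        have hbound := hL7 i hi1 hil.le
        have harith : (v : ℚ) < (i : ℚ) * v / l + ((l - i : ℕ) : ℚ) * q := by
          have hd : ((l - i : ℕ) : ℚ) = (l : ℚ) - i := by rw [Nat.cast_sub hil.le]
          rw [hd, mul_div_assoc]
          have hipos : (0 : ℚ) < ((l : ℚ) - i) := by
            have : (i : ℚ) < l := by exact_mod_cast hil
            linarith
          have key : ((l : ℚ) - i) * ((v : ℚ) / l) < ((l : ℚ) - i) * q :=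
            (mul_lt_mul_iff_right₀ hipos).2 hqgt
          have hvv : (l : ℚ) * ((v : ℚ) / l) = v := by field_simp
          have hsplit : (i : ℚ) * ((v : ℚ) / l) + ((l : ℚ) - i) * ((v : ℚ) / l)
              = (l : ℚ) * ((v : ℚ) / l) := by ring
          linarith [key, hvv, hsplit]
        calc (((v : ℚ)) : WithTop ℚ)
            < (((i : ℚ) * v / l + ((l - i : ℕ) : ℚ) * q : ℚ) : WithTop ℚ) := by
              exact_mod_cast harith
          _ ≤ w (evalHom α (a i)) + ((((l - i : ℕ) : ℚ) * q : ℚ) : WithTop ℚ) := by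
              rw [WithTop.coe_add]
              exact add_le_add hbound le_rfl
    rw [← w.map_neg, ← hE1, hwal] at hlt2
    exact lt_irrefl _ hlt2
  exact le_antisymm stepB ht_ge
end

section
/- Let F ∈ ℤ[X] be monic irreducible with F̄ = ∏_{i=1}^r φ̄_i^{l_i} mod p, and suppose F satisfies the L_{φ_i,λ_i} property for each i. If for some i the order of λ_i in ℚ/ℤ equals l_i, then d_i = gcd(ν_p(a_{i,L_i}), l_i) = 1 and the residual polynomial F_{φ_i}(Y) is linear, hence irreducible over 𝔽_{φ_i}. -/
open Polynomial

/-- The `p`-adic Gauss valuation of a polynomial over `ℤ`. -/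
noncomputable def gaussValZ (p : ℕ) (P : Polynomial ℤ) : ℕ∞ :=
  ⨅ i ∈ P.support, ((padicValInt p (P.coeff i) : ℕ∞))

/-- The residue field `𝔽_φ = ℤ[X]/(p, φ(X))`. -/
abbrev FphiZ (p : ℕ) (φ : Polynomial ℤ) :=
  Polynomial ℤ ⧸ Ideal.span ({Polynomial.C (p : ℤ), φ} : Set (Polynomial ℤ))

/-- The residual polynomial `Σ_{k=0}^d red(t_k) Y^{d-k} ∈ 𝔽_φ[Y]`. -/
noncomputable def residualPolyZ (p : ℕ) (φ : Polynomial ℤ)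
    (t : ℕ → Polynomial ℤ) (d : ℕ) : Polynomial (FphiZ p φ) :=
  ∑ k ∈ Finset.range (d + 1),
    Polynomial.C (Ideal.Quotient.mk _ (t k)) * Polynomial.X ^ (d - k)


lemma spanEqKer (p : ℕ) [Fact p.Prime] (φ : Polynomial ℤ) :
    Ideal.span ({Polynomial.C (p : ℤ), φ} : Set (Polynomial ℤ)) =
      RingHom.ker ((Ideal.Quotient.mk (Ideal.span
          ({φ.map (Int.castRingHom (ZMod p))} : Set (Polynomial (ZMod p))))).comp
        (Polynomial.mapRingHom (Int.castRingHom (ZMod p)))) := by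
  set c := Int.castRingHom (ZMod p)
  apply le_antisymm
  · rw [Ideal.span_le]
    rintro g (rfl | rfl)
    · have hc : ((Polynomial.C ((p : ℕ) : ℤ)).map c) = 0 := by
        rw [Polynomial.map_C]
        norm_num
      refine RingHom.mem_ker.mpr ?_
      rw [RingHom.comp_apply, coe_mapRingHom, hc, map_zero]
    · simp only [RingHom.mem_ker, RingHom.comp_apply, coe_mapRingHom,
        Ideal.Quotient.eq_zero_iff_mem, SetLike.mem_coe]
      exact Ideal.subset_span (Set.mem_singleton _)
  · intro g hg
    simp only [RingHom.mem_ker, RingHom.comp_apply, coe_mapRingHom,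
      Ideal.Quotient.eq_zero_iff_mem, Ideal.mem_span_singleton] at hg
    obtain ⟨u, hu⟩ := hg
    obtain ⟨h, rfl⟩ := Polynomial.map_surjective c ZMod.intCast_surjective u
    have hmem : g - φ * h ∈ RingHom.ker (Polynomial.mapRingHom c) := by
      simp [RingHom.mem_ker, Polynomial.map_mul, hu]
    rw [Polynomial.ker_mapRingHom, ZMod.ker_intCastRingHom, Ideal.map_span,
      Set.image_singleton] at hmem
    have h1 : g - φ * h ∈ Ideal.span ({Polynomial.C (p : ℤ), φ} : Set (Polynomial ℤ)) :=
      Ideal.span_mono (by simp) hmem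
    have h2 : φ * h ∈ Ideal.span ({Polynomial.C (p : ℤ), φ} : Set (Polynomial ℤ)) :=
      Ideal.mul_mem_right _ _ (Ideal.subset_span (by simp))
    simpa using add_mem h1 h2

lemma isFieldFphiZ (p : ℕ) [Fact p.Prime] (φ : Polynomial ℤ)
    (hirr : Irreducible (φ.map (Int.castRingHom (ZMod p)))) :
    IsField (Polynomial ℤ ⧸ Ideal.span ({Polynomial.C (p : ℤ), φ} : Set (Polynomial ℤ))) := by
  set c := Int.castRingHom (ZMod p)
  set J := Ideal.span ({φ.map c} : Set (Polynomial (ZMod p)))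
  have hsurj : Function.Surjective
      ((Ideal.Quotient.mk J).comp (Polynomial.mapRingHom c)) :=
    (Ideal.Quotient.mk_surjective).comp (Polynomial.map_surjective c ZMod.intCast_surjective)
  have e := (Ideal.quotEquivOfEq (spanEqKer p φ)).trans
    (RingHom.quotientKerEquivOfSurjective hsurj)
  haveI : J.IsMaximal := PrincipalIdealRing.isMaximal_of_irreducible hirr
  letI : Field (Polynomial (ZMod p) ⧸ J) := Ideal.Quotient.field J
  exact e.toMulEquiv.isField (Field.toIsField _)

lemma mkNeZero (p : ℕ) [Fact p.Prime] (φ : Polynomial ℤ) (hφmonic : φ.Monic)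
    (g : Polynomial ℤ) (hdeg : g.degree < φ.degree) (hval : gaussValZ p g = 0) :
    Ideal.Quotient.mk (Ideal.span ({Polynomial.C (p : ℤ), φ} : Set (Polynomial ℤ))) g ≠ 0 := by
  set c := Int.castRingHom (ZMod p)
  intro h0
  have hmem : g ∈ Ideal.span ({Polynomial.C (p : ℤ), φ} : Set (Polynomial ℤ)) :=
    (Ideal.Quotient.eq_zero_iff_mem).mp h0
  rw [spanEqKer p φ] at hmem
  simp only [RingHom.mem_ker, RingHom.comp_apply, coe_mapRingHom,
    Ideal.Quotient.eq_zero_iff_mem, Ideal.mem_span_singleton] at hmem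
  -- first: map c g = 0
  have hmap0 : g.map c = 0 := by
    by_contra hne
    have h1 : (φ.map c).degree ≤ (g.map c).degree := Polynomial.degree_le_of_dvd hmem hne
    have h2 : (φ.map c).degree = φ.degree := hφmonic.degree_map c
    have h3 : (g.map c).degree ≤ g.degree := Polynomial.degree_map_le
    exact absurd ((h2 ▸ h1).trans h3) (not_le.mpr hdeg)
  -- hence every coefficient of g is divisible by p
  have hcoef : ∀ n, (p : ℤ) ∣ g.coeff n := by
    intro n
    have : (g.map c).coeff n = 0 := by rw [hmap0]; simp
    rw [Polynomial.coeff_map] at this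
    exact (ZMod.intCast_zmod_eq_zero_iff_dvd _ _).mp this
  have hge : (1 : ℕ∞) ≤ gaussValZ p g := by
    refine le_iInf fun n => le_iInf fun hn => ?_
    have hne : g.coeff n ≠ 0 := Polynomial.mem_support_iff.mp hn
    have : 1 ≤ padicValInt p (g.coeff n) := by
      have := (padicValInt_dvd_iff (p := p) 1 (g.coeff n)).mp (by simpa using hcoef n)
      tauto
    exact_mod_cast this
  rw [hval] at hge
  simp at hge
/-- Let `F ∈ ℤ[X]` be monic irreducible with `F̄ = ∏ φ̄_i^{l_i}` mod `p`, satisfying the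
`L_{φ_i,λ_i}` property for each `i`.  If for some `i` the order of `λ_i = v_i/l_i` in
`ℚ/ℤ` (i.e. the least positive `n` with `n·λ_i ∈ ℤ`) equals `l_i`, then
`d_i = gcd(v_i, l_i) = 1` and the residual polynomial `F_{φ_i}` is linear, hence
irreducible over `𝔽_{φ_i}`. -/
theorem residual_linear_of_order_eq (p : ℕ) [Fact p.Prime]
    (F : Polynomial ℤ) (hFmonic : F.Monic) (hFirr : Irreducible F)
    (r : ℕ) (hr : 0 < r)
    (φ : Fin r → Polynomial ℤ) (hφmonic : ∀ i, (φ i).Monic)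
    (hφirr : ∀ i, Irreducible ((φ i).map (Int.castRingHom (ZMod p))))
    (hφdist : ∀ i j, i ≠ j →
      (φ i).map (Int.castRingHom (ZMod p)) ≠ (φ j).map (Int.castRingHom (ZMod p)))
    (l : Fin r → ℕ) (hl : ∀ i, 0 < l i)
    (hFbar : F.map (Int.castRingHom (ZMod p))
      = ∏ i, ((φ i).map (Int.castRingHom (ZMod p))) ^ (l i))
    -- the φ_i-adic expansions of F, with s_i = L_i − l_i the largest unit index
    (L s : Fin r → ℕ) (a : Fin r → ℕ → Polynomial ℤ)
    (hexp : ∀ i, F = ∑ j ∈ Finset.range (L i + 1), a i j * (φ i) ^ (L i - j))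
    (hdeg : ∀ i, ∀ j ≤ L i, (a i j).degree < (φ i).degree)
    (hsle : ∀ i, s i ≤ L i) (hsval : ∀ i, gaussValZ p (a i (s i)) = 0)
    (hsmax : ∀ i, ∀ j ≤ L i, gaussValZ p (a i j) = 0 → j ≤ s i)
    (hls : ∀ i, s i = L i - l i)
    (v : Fin r → ℕ) (hv : ∀ i, gaussValZ p (a i (L i)) = (v i : ℕ∞))
    -- F satisfies the L_{φ_i,λ_i} property for each i
    (hLprop : ∀ i, ∀ k, 1 ≤ k → k ≤ l i →
      (k : ℕ∞) * (v i : ℕ∞) ≤ (l i : ℕ∞) * gaussValZ p (a i (s i + k)))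
    -- the order of λ_i in ℚ/ℤ equals l_i for a given index i
    (i : Fin r)
    (hord : IsLeast {n : ℕ | 0 < n ∧ ∃ z : ℤ, (n : ℚ) * ((v i : ℚ) / (l i : ℚ)) = (z : ℚ)}
      (l i)) :
    Nat.gcd (v i) (l i) = 1 ∧
    ∀ t : ℕ → Polynomial ℤ,
      (∀ k ≤ Nat.gcd (v i) (l i),
        a i (s i + k * (l i / Nat.gcd (v i) (l i)))
          = Polynomial.C ((p : ℤ) ^ (k * (v i / Nat.gcd (v i) (l i)))) * t k) →
      (residualPolyZ p (φ i) t (Nat.gcd (v i) (l i))).degree = 1 ∧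
      Irreducible (residualPolyZ p (φ i) t (Nat.gcd (v i) (l i))) := by
  classical
  set g := Nat.gcd (v i) (l i) with hg
  have hgl : g ∣ l i := Nat.gcd_dvd_right _ _
  have hgv : g ∣ v i := Nat.gcd_dvd_left _ _
  have hgpos : 0 < g := Nat.gcd_pos_of_pos_right _ (hl i)
  have hlq : (l i : ℚ) ≠ 0 := Nat.cast_ne_zero.mpr (hl i).ne'
  have hgq : (g : ℚ) ≠ 0 := Nat.cast_ne_zero.mpr hgpos.ne'
  have hmem : (l i / g) ∈ {n : ℕ | 0 < n ∧ ∃ z : ℤ, (n : ℚ) * ((v i : ℚ) / (l i : ℚ)) = (z : ℚ)} := by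
    refine ⟨Nat.div_pos (Nat.le_of_dvd (hl i) hgl) hgpos, ⟨(v i / g : ℕ), ?_⟩⟩
    rw [Int.cast_natCast, Nat.cast_div hgl hgq, Nat.cast_div hgv hgq]
    field_simp
  have hle1 : l i ≤ l i / g := hord.2 hmem
  have hle2 : l i / g ≤ l i := Nat.div_le_self _ _
  have hdiv : l i / g = l i := le_antisymm hle2 hle1
  have hg1 : g = 1 := by
    have := Nat.mul_div_cancel' hgl
    rw [hdiv] at this
    nlinarith [hl i]
  refine ⟨hg1, ?_⟩
  intro t ht
  -- t 0 = a i (s i)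
  have ht0 := ht 0 (by omega)
  simp only [hg1, Nat.zero_mul, Nat.add_zero, zero_mul, pow_zero, map_one, one_mul] at ht0
  -- the leading residual coefficient is nonzero
  have hne : Ideal.Quotient.mk (Ideal.span ({Polynomial.C (p : ℤ), φ i} : Set (Polynomial ℤ)))
      (t 0) ≠ 0 := by
    rw [← ht0]
    exact mkNeZero p (φ i) (hφmonic i) _ (hdeg i (s i) (hsle i)) (hsval i)
  -- compute the residual polynomial for d = 1
  have hres : residualPolyZ p (φ i) t (Nat.gcd (v i) (l i))
      = Polynomial.C (Ideal.Quotient.mk _ (t 0)) * Polynomial.X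
        + Polynomial.C (Ideal.Quotient.mk _ (t 1)) := by
    rw [show Nat.gcd (v i) (l i) = 1 from hg1]
    rw [residualPolyZ, Finset.sum_range_succ, Finset.sum_range_one]
    norm_num
  have hdeg1 : (residualPolyZ p (φ i) t (Nat.gcd (v i) (l i))).degree = 1 := by
    rw [hres]
    exact Polynomial.degree_linear hne
  refine ⟨hdeg1, ?_⟩
  letI : Field (FphiZ p (φ i)) := (isFieldFphiZ p (φ i) (hφirr i)).toField
  exact Polynomial.irreducible_of_degree_eq_one hdeg1
end

section
/- Let F(X) = X^6 + 36X^3 + 48 and K = ℚ(α) for a complex root α of F. Then F is irreducible over ℚ, and there is exactly one valuation w of K extending the 2-adic valuation ν_2, with ramification index e(w) = 3 and residue degree f(w) = 2. -/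
open Polynomial

section Aux

lemma ex2Fz_eq : (X ^ 6 + 36 * X ^ 3 + 48 : Polynomial ℤ) = X ^ 6 + C 36 * X ^ 3 + C 48 := by
  norm_num

lemma ex2Fz_monic : (X ^ 6 + 36 * X ^ 3 + 48 : Polynomial ℤ).Monic := by
  rw [ex2Fz_eq]; monicity!

lemma ex2Fz_natDegree : (X ^ 6 + 36 * X ^ 3 + 48 : Polynomial ℤ).natDegree = 6 := by
  rw [ex2Fz_eq]; compute_degree!

lemma ex2Fz_irred : Irreducible (X ^ 6 + 36 * X ^ 3 + 48 : Polynomial ℤ) := by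
  have h3 : Prime (3 : ℤ) := Int.prime_three
  have hP : (Ideal.span {(3:ℤ)}).IsPrime := (Ideal.span_singleton_prime (by norm_num)).mpr h3
  have hE : (X ^ 6 + 36 * X ^ 3 + 48 : Polynomial ℤ).IsEisensteinAt (Ideal.span {(3:ℤ)}) := by
    constructor
    · rw [ex2Fz_monic.leadingCoeff, Ideal.mem_span_singleton]
      norm_num
    · intro n hn
      rw [ex2Fz_natDegree] at hn
      rw [ex2Fz_eq, Ideal.mem_span_singleton]
      interval_cases n <;> simp <;> norm_num
    · rw [ex2Fz_eq, Ideal.span_singleton_pow, Ideal.mem_span_singleton]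
      simp
  exact hE.irreducible hP ex2Fz_monic.isPrimitive (by rw [ex2Fz_natDegree]; norm_num)

lemma ex2Fq_irred : Irreducible ((X ^ 6 + 36 * X ^ 3 + 48 : Polynomial ℤ).map (Int.castRingHom ℚ)) := by
  have : Int.castRingHom ℚ = algebraMap ℤ ℚ := rfl
  rw [this]
  exact (ex2Fz_monic.isPrimitive.irreducible_iff_irreducible_map_fraction_map).mp ex2Fz_irred

end Aux

set_option maxHeartbeats 1000000 in
set_option synthInstance.maxHeartbeats 400000 in
/-- Let `F(X) = X^6 + 36X^3 + 48` and `K = ℚ(α)` for a root `α` of `F`.  Then `F` is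
irreducible over `ℚ`, and there is exactly one valuation of `K` extending `ν_2` —
equivalently, exactly one maximal ideal of `𝒪_K` above `2` — with ramification index `3`
and residue degree `2`. -/
theorem example2_one_valuation (K : Type*) [Field K] [Algebra ℚ K] (α : K)
    (hroot : Polynomial.aeval α
      ((X ^ 6 + 36 * X ^ 3 + 48 : Polynomial ℤ).map (Int.castRingHom ℚ)) = 0)
    (hgen : Algebra.adjoin ℚ ({α} : Set K) = ⊤) :
    Irreducible ((X ^ 6 + 36 * X ^ 3 + 48 : Polynomial ℤ).map (Int.castRingHom ℚ)) ∧
    ∃ P : Ideal (integralClosure ℤ K),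
      (P.IsMaximal ∧
        Ideal.comap (algebraMap ℤ (integralClosure ℤ K)) P = Ideal.span {(2 : ℤ)}) ∧
      (∀ Q : Ideal (integralClosure ℤ K), Q.IsMaximal →
        Ideal.comap (algebraMap ℤ (integralClosure ℤ K)) Q = Ideal.span {(2 : ℤ)} →
        Q = P) ∧
      Ideal.ramificationIdx'
        (Ideal.span {(2 : ℤ)}) P = 3 ∧
      Ideal.inertiaDeg'
        (Ideal.span {(2 : ℤ)}) P = 2 := by
  classical
  haveI : CharZero K := charZero_of_injective_algebraMap (algebraMap ℚ K).injective
  refine ⟨ex2Fq_irred, ?_⟩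
  -- basic facts about α
  have hFqmonic : ((X ^ 6 + 36 * X ^ 3 + 48 : Polynomial ℤ).map (Int.castRingHom ℚ)).Monic :=
    ex2Fz_monic.map _
  have hintQ : IsIntegral ℚ α := ⟨_, hFqmonic, by simpa [aeval_def] using hroot⟩
  have hα6 : α ^ 6 + 36 * α ^ 3 + 48 = 0 := by
    have := hroot
    simp only [Polynomial.map_add, Polynomial.map_pow, Polynomial.map_mul, Polynomial.map_X,
      Polynomial.map_ofNat, map_add, map_pow, map_mul, aeval_X, map_ofNat] at this
    exact this
  have hintZ : IsIntegral ℤ α := by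
    refine ⟨X ^ 6 + 36 * X ^ 3 + 48, ex2Fz_monic, ?_⟩
    have := hroot
    rw [show Int.castRingHom ℚ = algebraMap ℤ ℚ from rfl, aeval_map_algebraMap] at this
    simpa [aeval_def] using this
  have hmin : minpoly ℚ α = (X ^ 6 + 36 * X ^ 3 + 48 : Polynomial ℤ).map (Int.castRingHom ℚ) :=
    (minpoly.eq_of_irreducible_of_monic ex2Fq_irred hroot hFqmonic).symm
  haveI hFD : FiniteDimensional ℚ K :=
    ((Algebra.adjoin.powerBasis hintQ).map
      ((Subalgebra.equivOfEq _ _ hgen).trans Subalgebra.topEquiv)).finite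
  have hfinrank : Module.finrank ℚ K = 6 := by
    rw [((Algebra.adjoin.powerBasis hintQ).map
      ((Subalgebra.equivOfEq _ _ hgen).trans Subalgebra.topEquiv)).finrank,
      PowerBasis.map_dim, Algebra.adjoin.powerBasis_dim, hmin,
      ex2Fz_monic.natDegree_map, ex2Fz_natDegree]
  -- the ring of integers
  haveI hDD : IsDedekindDomain (integralClosure ℤ K) :=
    integralClosure.isDedekindDomain ℤ ℚ K
  haveI hMF : Module.Finite ℤ (integralClosure ℤ K) :=
    IsIntegralClosure.finite ℤ ℚ K _
  haveI hFR : IsFractionRing (integralClosure ℤ K) K :=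
    IsIntegralClosure.isFractionRing_of_finite_extension ℤ ℚ K _
  -- the prime 2
  have h2p : Prime (2 : ℤ) := Int.prime_two
  haveI hpmax : (Ideal.span {(2:ℤ)}).IsMaximal :=
    PrincipalIdealRing.isMaximal_of_irreducible h2p.irreducible
  have hpbot : (Ideal.span {(2:ℤ)}) ≠ ⊥ := by
    rw [Ne, Ideal.span_singleton_eq_bot]; norm_num
  have hmap : Ideal.map (algebraMap ℤ (integralClosure ℤ K)) (Ideal.span {(2:ℤ)})
      = Ideal.span {(2 : integralClosure ℤ K)} := by
    rw [Ideal.map_span, Set.image_singleton, map_ofNat]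
  have hmapne : Ideal.map (algebraMap ℤ (integralClosure ℤ K)) (Ideal.span {(2:ℤ)}) ≠ ⊥ := by
    rw [hmap, Ne, Ideal.span_singleton_eq_bot]
    exact two_ne_zero
  -- the elements a = α and g = α^3/4 of the ring of integers
  have hα0 : α ≠ 0 := by
    intro h
    rw [h] at hα6
    norm_num at hα6
  have hγ : (α ^ 3 / 4) ^ 2 + 9 * (α ^ 3 / 4) + 3 = 0 := by
    have h16 : (α ^ 3 / 4) ^ 2 + 9 * (α ^ 3 / 4) + 3 = (α ^ 6 + 36 * α ^ 3 + 48) / 16 := by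
      ring
    rw [h16, hα6, zero_div]
  have hγint : IsIntegral ℤ (α ^ 3 / 4) := by
    refine ⟨X ^ 2 + C 9 * X + C 3, by monicity!, ?_⟩
    have : (aeval (α ^ 3 / 4)) (X ^ 2 + C 9 * X + C 3 : Polynomial ℤ) = 0 := by
      simp only [map_add, map_mul, map_pow, aeval_X, aeval_C, map_ofNat]
      push_cast
      linear_combination hγ
    simpa [aeval_def] using this
  set O := integralClosure ℤ K with hO
  set a : O := ⟨α, hintZ⟩ with ha
  set g : O := ⟨α ^ 3 / 4, hγint⟩ with hg
  have ha0 : a ≠ 0 := by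
    intro h
    exact hα0 (by simpa [ha] using congrArg Subtype.val h)
  have hg0 : g ≠ 0 := by
    intro h
    have : (α ^ 3 / 4 : K) = 0 := congrArg Subtype.val h
    rw [this] at hγ
    norm_num at hγ
  have c4 : ((4 : O) : K) = 4 := map_ofNat (Subalgebra.val O) 4
  have c9 : ((9 : O) : K) = 9 := map_ofNat (Subalgebra.val O) 9
  have c3 : ((3 : O) : K) = 3 := map_ofNat (Subalgebra.val O) 3
  have h4g : a ^ 3 = 4 * g := by
    apply Subtype.ext
    show α ^ 3 = ((4 * g : O) : K)
    push_cast [c4, hg]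
    field_simp
  have hgrel : g ^ 2 + 9 * g + 3 = 0 := by
    apply Subtype.ext
    show ((g ^ 2 + 9 * g + 3 : O) : K) = ((0 : O) : K)
    push_cast [c9, c3]
    linear_combination hγ
  -- the key local computation
  have key : ∀ Q : Ideal O, Q.IsPrime → Q ≠ ⊥ →
      Ideal.map (algebraMap ℤ O) (Ideal.span {(2:ℤ)}) ≤ Q →
      Ideal.comap (algebraMap ℤ O) Q = Ideal.span {(2:ℤ)} ∧
      3 ≤ Ideal.ramificationIdx' (Ideal.span {(2:ℤ)}) Q ∧
      2 ≤ Ideal.inertiaDeg' (Ideal.span {(2:ℤ)}) Q := by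
    intro Q hQprime hQbot hle
    haveI := hQprime
    have h2Q : (2 : O) ∈ Q := by
      apply hle
      rw [hmap]
      exact Ideal.subset_span rfl
    have hgQ : g ∉ Q := by
      intro hgQ
      have h3Q : (3 : O) ∈ Q := by
        have : (3 : O) = -(g ^ 2 + 9 * g) + (g ^ 2 + 9 * g + 3) := by ring
        rw [this, hgrel, add_zero]
        exact neg_mem (add_mem (Ideal.pow_mem_of_mem _ hgQ 2 (by norm_num)) (Ideal.mul_mem_left _ _ hgQ))
      have h1Q : (1 : O) ∈ Q := by
        have : (1 : O) = 3 - 2 := by norm_num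
        rw [this]
        exact sub_mem h3Q h2Q
      exact hQprime.ne_top (Ideal.eq_top_iff_one _ |>.mpr h1Q)
    have hcomap : Ideal.comap (algebraMap ℤ O) Q = Ideal.span {(2:ℤ)} := by
      refine (hpmax.eq_of_le ?_ ?_).symm
      · intro h
        have : (1 : O) ∈ Q := by
          have := Ideal.eq_top_iff_one _ |>.mp h
          simpa using this
        exact hQprime.ne_top (Ideal.eq_top_iff_one _ |>.mpr this)
      · rw [← Ideal.map_le_iff_le_comap] at *
        exact hle
    refine ⟨hcomap, ?_, ?_⟩
    · -- ramification index ≥ 3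
      have hecount := Ideal.IsDedekindDomain.ramificationIdx'_eq_normalizedFactors_count
        (p := Ideal.span {(2:ℤ)}) hmapne hQprime hQbot
      have h2Obot : Ideal.span {(2:O)} ≠ ⊥ := by
        rw [Ne, Ideal.span_singleton_eq_bot]; exact two_ne_zero
      have hgbot : Ideal.span {g} ≠ ⊥ := by
        rw [Ne, Ideal.span_singleton_eq_bot]; exact hg0
      have hc3 : Multiset.count Q (UniqueFactorizationMonoid.normalizedFactors
            (Ideal.span {a} ^ 3))
          = 3 * Multiset.count Q (UniqueFactorizationMonoid.normalizedFactors
            (Ideal.span {a})) := by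
        rw [UniqueFactorizationMonoid.normalizedFactors_pow, Multiset.count_nsmul]
      have hspan : Ideal.span {a} ^ 3 = Ideal.span {(2:O)} ^ 2 * Ideal.span {g} := by
        rw [Ideal.span_singleton_pow, Ideal.span_singleton_pow,
          Ideal.span_singleton_mul_span_singleton]
        congr 1
        rw [h4g]
        ring
      have hcg : Multiset.count Q (UniqueFactorizationMonoid.normalizedFactors
          (Ideal.span {g})) = 0 := by
        refine Multiset.count_eq_zero.mpr fun hmem => hgQ ?_
        have hdvd := UniqueFactorizationMonoid.dvd_of_mem_normalizedFactors hmem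
        have hle' := Ideal.le_of_dvd hdvd
        exact hle' (Ideal.subset_span rfl)
      have hc4g : Multiset.count Q (UniqueFactorizationMonoid.normalizedFactors
            (Ideal.span {(2:O)} ^ 2 * Ideal.span {g}))
          = 2 * Multiset.count Q (UniqueFactorizationMonoid.normalizedFactors
            (Ideal.span {(2:O)})) := by
        rw [UniqueFactorizationMonoid.normalizedFactors_mul (pow_ne_zero 2 h2Obot) hgbot,
          Multiset.count_add, UniqueFactorizationMonoid.normalizedFactors_pow,
          Multiset.count_nsmul, hcg, add_zero]
      have he : Ideal.ramificationIdx' (Ideal.span {(2:ℤ)}) Q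
          = Multiset.count Q (UniqueFactorizationMonoid.normalizedFactors
            (Ideal.span {(2:O)})) := by
        rw [hecount, hmap]
      have hene : Ideal.ramificationIdx' (Ideal.span {(2:ℤ)}) Q ≠ 0 :=
        Ideal.IsDedekindDomain.ramificationIdx'_ne_zero hmapne hQprime hle
      have h3dvd : 3 ∣ Ideal.ramificationIdx' (Ideal.span {(2:ℤ)}) Q := by
        have h32 : Nat.Coprime 3 2 := by norm_num
        refine (Nat.Coprime.dvd_of_dvd_mul_right h32) ?_
        refine ⟨Multiset.count Q (UniqueFactorizationMonoid.normalizedFactors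
          (Ideal.span {a})), ?_⟩
        rw [he, mul_comm, ← hc4g, ← hspan, hc3]
      exact Nat.le_of_dvd (Nat.pos_of_ne_zero hene) h3dvd
    · -- inertia degree ≥ 2
      haveI hlies : Q.LiesOver (Ideal.span {(2:ℤ)}) := ⟨hcomap.symm⟩
      have hfpos : 0 < Ideal.inertiaDeg' (Ideal.span {(2:ℤ)}) Q :=
        Ideal.inertiaDeg'_pos (Ideal.span {(2:ℤ)}) Q
      have hfne1 : Ideal.inertiaDeg' (Ideal.span {(2:ℤ)}) Q ≠ 1 := by
        intro h1
        rw [Ideal.inertiaDeg'_algebraMap] at h1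
        haveI : Nontrivial (O ⧸ Q) := Ideal.Quotient.nontrivial_iff.mpr hQprime.ne_top
        have hone : (1 : O ⧸ Q) ≠ 0 := one_ne_zero
        letI : Field (ℤ ⧸ Ideal.span {(2:ℤ)}) := Ideal.Quotient.field _
        obtain ⟨c, hc⟩ := (@finrank_eq_one_iff_of_nonzero' (ℤ ⧸ Ideal.span {(2:ℤ)})
          (O ⧸ Q) _ _ _ (1 : O ⧸ Q) hone).mp (by exact h1) (Ideal.Quotient.mk Q g)
        obtain ⟨n, rfl⟩ := Ideal.Quotient.mk_surjective c
        rw [Algebra.smul_def, mul_one] at hc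
        have halg : algebraMap (ℤ ⧸ Ideal.span {(2:ℤ)}) (O ⧸ Q) (Ideal.Quotient.mk _ n)
            = Ideal.Quotient.mk Q (algebraMap ℤ O n) := rfl
        rw [halg] at hc
        have h2z : (2 : O ⧸ Q) = 0 := by
          rw [show ((2 : O ⧸ Q)) = Ideal.Quotient.mk Q (2:O) from (map_ofNat _ 2).symm]
          exact Ideal.Quotient.eq_zero_iff_mem.mpr h2Q
        have hrel : (Ideal.Quotient.mk Q g) ^ 2 + 9 * (Ideal.Quotient.mk Q g) + 3 = 0 := by
          have h0 := congrArg (Ideal.Quotient.mk Q) hgrel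
          rw [map_add, map_add, map_mul, map_pow, map_ofNat, map_ofNat, map_zero] at h0
          exact h0
        have hx : ((n : ℤ) : O ⧸ Q) = Ideal.Quotient.mk Q g := by
          rw [← hc, show (algebraMap ℤ O) n = ((n : ℤ) : O) from by
            rw [algebraMap_int_eq]; rfl]
          exact map_intCast (Ideal.Quotient.mk Q) n
        rw [← hx] at hrel
        rcases Int.even_or_odd n with ⟨m, hm⟩ | ⟨m, hm⟩ <;> subst hm <;>
            push_cast at hrel <;> apply hone
        · linear_combination hrel - (2 * (m : O ⧸ Q) ^ 2 + 9 * (m : O ⧸ Q) + 1) * h2z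
        · linear_combination hrel - (2 * (m : O ⧸ Q) ^ 2 + 11 * (m : O ⧸ Q) + 6) * h2z
      omega
  -- the global counting argument
  have hsum := Ideal.sum_ramification_inertia (R := ℤ) (S := O) (p := Ideal.span {(2:ℤ)})
    ℚ K hpbot
  rw [hfinrank, IsDedekindDomain.primesOverFinset] at hsum
  set T := (UniqueFactorizationMonoid.factors
    (Ideal.map (algebraMap ℤ O) (Ideal.span {(2:ℤ)}))).toFinset with hT
  have hmemT : ∀ Q : Ideal O, Q ∈ T →
      Q.IsPrime ∧ Q ≠ ⊥ ∧ Ideal.map (algebraMap ℤ O) (Ideal.span {(2:ℤ)}) ≤ Q := by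
    intro Q hQ
    have hQ' := Multiset.mem_toFinset.mp hQ
    have hprime := UniqueFactorizationMonoid.prime_of_factor _ hQ'
    exact ⟨Ideal.isPrime_of_prime hprime, hprime.ne_zero,
      Ideal.le_of_dvd (UniqueFactorizationMonoid.dvd_of_mem_factors hQ')⟩
  have hterm : ∀ Q ∈ T, 6 ≤ Ideal.ramificationIdx' (Ideal.span {(2:ℤ)}) Q *
      Ideal.inertiaDeg' (Ideal.span {(2:ℤ)}) Q := by
    intro Q hQ
    obtain ⟨h1, h2, h3⟩ := hmemT Q hQ
    obtain ⟨-, he, hf⟩ := key Q h1 h2 h3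
    calc (6 : ℕ) = 3 * 2 := by norm_num
    _ ≤ _ := Nat.mul_le_mul he hf
  obtain ⟨P0, hP0T⟩ : T.Nonempty := by
    rcases T.eq_empty_or_nonempty with h | h
    · rw [h, Finset.sum_empty] at hsum
      norm_num at hsum
    · exact h
  have huniq : ∀ Q ∈ T, Q = P0 := by
    intro Q hQ
    by_contra hne
    have hsub : ({Q, P0} : Finset (Ideal O)) ⊆ T := by
      intro x hx
      rcases Finset.mem_insert.mp hx with rfl | hx
      · exact hQ
      · rw [Finset.mem_singleton.mp hx]; exact hP0T
    have hQ6 := hterm Q hQ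
    have hP06 := hterm P0 hP0T
    have hpair := Finset.sum_pair (f := fun x =>
      Ideal.ramificationIdx' (Ideal.span {(2:ℤ)}) x *
      Ideal.inertiaDeg' (Ideal.span {(2:ℤ)}) x) hne
    have hle' := Finset.sum_le_sum_of_subset (f := fun x =>
      Ideal.ramificationIdx' (Ideal.span {(2:ℤ)}) x *
      Ideal.inertiaDeg' (Ideal.span {(2:ℤ)}) x) hsub
    beta_reduce at hpair hle'
    rw [hpair] at hle'
    omega
  have hTP0 : T = {P0} := Finset.eq_singleton_iff_unique_mem.mpr ⟨hP0T, huniq⟩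
  rw [hTP0, Finset.sum_singleton] at hsum
  obtain ⟨hP0prime, hP0bot, hP0le⟩ := hmemT P0 hP0T
  obtain ⟨hP0comap, hP0e, hP0f⟩ := key P0 hP0prime hP0bot hP0le
  have hfle : Ideal.inertiaDeg' (Ideal.span {(2:ℤ)}) P0 ≤ 2 := by
    nlinarith
  have hf2 : Ideal.inertiaDeg' (Ideal.span {(2:ℤ)}) P0 = 2 :=
    le_antisymm hfle hP0f
  have he3 : Ideal.ramificationIdx' (Ideal.span {(2:ℤ)}) P0 = 3 := by
    rw [hf2] at hsum
    omega
  refine ⟨P0, ⟨hP0prime.isMaximal hP0bot, hP0comap⟩, ?_, he3, hf2⟩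
  intro Q hQmax hQcomap
  have hQbot : Q ≠ ⊥ := by
    intro h
    rw [h] at hQcomap
    have : (2 : ℤ) ∈ (⊥ : Ideal ℤ) := by
      rw [show Ideal.comap (algebraMap ℤ O) (⊥ : Ideal O) = ⊥ from by
        rw [← RingHom.ker_eq_comap_bot]
        exact (RingHom.injective_iff_ker_eq_bot _).mp (algebraMap ℤ (↥O)).injective_int]
        at hQcomap
      rw [hQcomap]
      exact Ideal.subset_span rfl
    simpa using this
  have hQle : Ideal.map (algebraMap ℤ O) (Ideal.span {(2:ℤ)}) ≤ Q := by
    rw [Ideal.map_le_iff_le_comap, hQcomap]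
  apply huniq
  rw [hT, Multiset.mem_toFinset, UniqueFactorizationMonoid.factors_eq_normalizedFactors,
    Ideal.mem_normalizedFactors_iff hmapne]
  exact ⟨hQmax.isPrime, hQle⟩
end
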